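/- In the polynomial ring ℚ[a0,...,a7], the identity f1²·f4 = f3² + 4·f21·f22·f23 holds, where f1 = a0+a1+...+a7; f4 = (a0²a7² + a3²a4² + a5²a2² + a6²a1²) + 4(a0a3a5a6 + a7a4a2a1) − 2(a0a7a3a4 + a0a7a5a2 + a0a7a6a1 + a3a4a5a2 + a3a4a6a1 + a5a2a6a1); f3 = ((a0+a3+a5+a6)−(a7+a4+a2+a1))·(a0a7+a3a4+a5a2+a6a1) − 2(a0a7(a0−a7)+a3a4(a3−a4)+a5a2(a5−a2)+a6a1(a6−a1)) + 2((a3a5a6+a0a5a6+a0a3a6+a0a3a5)−(a4a2a1+a7a2a1+a7a4a1+a7a4a2)); f21 = (a0+a4)(a7+a3)−(a1+a5)(a6+a2); f22 = (a0+a2)(a7+a5)−(a4+a6)(a3+a1); f23 = (a0+a1)(a7+a6)−(a2+a3)(a5+a4). -/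
import Mathlib


open MvPolynomial in
noncomputable def a0 : MvPolynomial (Fin 8) ℚ := X 0
open MvPolynomial in
noncomputable def a1 : MvPolynomial (Fin 8) ℚ := X 1
open MvPolynomial in
noncomputable def a2 : MvPolynomial (Fin 8) ℚ := X 2
open MvPolynomial in
noncomputable def a3 : MvPolynomial (Fin 8) ℚ := X 3
open MvPolynomial in
noncomputable def a4 : MvPolynomial (Fin 8) ℚ := X 4
open MvPolynomial in
noncomputable def a5 : MvPolynomial (Fin 8) ℚ := X 5
open MvPolynomial in
noncomputable def a6 : MvPolynomial (Fin 8) ℚ := X 6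
open MvPolynomial in
noncomputable def a7 : MvPolynomial (Fin 8) ℚ := X 7

theorem key_identity :
    (a0+a1+a2+a3+a4+a5+a6+a7)^2 * ((a0^2*a7^2 + a3^2*a4^2 + a5^2*a2^2 + a6^2*a1^2) + 4*(a0*a3*a5*a6 + a7*a4*a2*a1) - 2*(a0*a7*a3*a4 + a0*a7*a5*a2 + a0*a7*a6*a1 + a3*a4*a5*a2 + a3*a4*a6*a1 + a5*a2*a6*a1)) = (((a0+a3+a5+a6) - (a7+a4+a2+a1))*(a0*a7+a3*a4+a5*a2+a6*a1) - 2*(a0*a7*(a0-a7)+a3*a4*(a3-a4)+a5*a2*(a5-a2)+a6*a1*(a6-a1)) + 2*((a3*a5*a6+a0*a5*a6+a0*a3*a6+a0*a3*a5) - (a4*a2*a1+a7*a2*a1+a7*a4*a1+a7*a4*a2)))^2 + 4 * ((a0+a4)*(a7+a3) - (a1+a5)*(a6+a2)) * ((a0+a2)*(a7+a5) - (a4+a6)*(a3+a1)) * ((a0+a1)*(a7+a6) - (a2+a3)*(a5+a4)) := by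
  unfold a0 a1 a2 a3 a4 a5 a6 a7
  ring
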